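/- Let (Ω, P) be a probability space, p ∈ (0,1), H ∈ (0, 1/2), c ≥ 0, and let (ξ_i)_{i≥1} be a sequence of random variables taking values in {0,1} almost surely with P(ξ_i = 1) = p for all i and P(ξ_i = 1, ξ_j = 1) = p(p + c|i − j|^{2H−2}) for all i ≠ j. Then Var(ξ_1 + ⋯ + ξ_N)/N converges as N → ∞ to the finite limit p(1 − p) + 2·p·c·Σ_{k=1}^∞ k^{2H−2}; in particular the variance of the fractional binomial variable B_N(p, H, c) grows linearly in N. -/

import Mathlib

open MeasureTheory ProbabilityTheory Filter

/-- Row identity: `∑_{i<N} |i - N|^a = ∑_{k<N} (k+1)^a`. -/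
lemma gbp_aux_row (a : ℝ) (N : ℕ) :
    ∑ i ∈ Finset.range N, |(i : ℝ) - (N : ℝ)| ^ a
      = ∑ k ∈ Finset.range N, ((k : ℝ) + 1) ^ a := by
  rw [← Finset.sum_range_reflect (fun k => ((k : ℝ) + 1) ^ a) N]
  refine Finset.sum_congr rfl fun i hi => ?_
  rw [Finset.mem_range] at hi
  have hcast : ((N - 1 - i : ℕ) : ℝ) + 1 = (N : ℝ) - i := by
    have h1 : N - 1 - i + 1 = N - i := by omega
    have h2 : i ≤ N := hi.le
    rw [← Nat.cast_one (R := ℝ), ← Nat.cast_add, h1, Nat.cast_sub h2]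
  rw [hcast, abs_sub_comm, abs_of_nonneg (by
    have : (i : ℝ) < N := by exact_mod_cast hi
    linarith)]

/-- Off-diagonal double sum identity. -/
lemma gbp_aux_G (a : ℝ) (N : ℕ) :
    (∑ i ∈ Finset.range N, ∑ j ∈ Finset.range N,
      if i = j then (0 : ℝ) else |(i : ℝ) - (j : ℝ)| ^ a)
      = 2 * ∑ m ∈ Finset.range N, ∑ k ∈ Finset.range m, ((k : ℝ) + 1) ^ a := by
  induction N with
  | zero => simp
  | succ n ih =>
    have hrow := gbp_aux_row a n
    have hcol : (∑ j ∈ Finset.range n,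
        if (n : ℕ) = j then (0 : ℝ) else |(n : ℝ) - (j : ℝ)| ^ a)
        = ∑ k ∈ Finset.range n, ((k : ℝ) + 1) ^ a := by
      rw [← hrow]
      refine Finset.sum_congr rfl fun j hj => ?_
      rw [Finset.mem_range] at hj
      rw [if_neg (by omega), abs_sub_comm]
    have hcol' : (∑ i ∈ Finset.range n,
        if i = n then (0 : ℝ) else |(i : ℝ) - (n : ℝ)| ^ a)
        = ∑ k ∈ Finset.range n, ((k : ℝ) + 1) ^ a := by
      rw [← hrow]
      refine Finset.sum_congr rfl fun j hj => ?_
      rw [Finset.mem_range] at hj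
      rw [if_neg (by omega)]
    simp only [Finset.sum_range_succ, Finset.sum_add_distrib]
    rw [ih, hcol, hcol']; simp only [if_true]
    ring

/-- For a GBP with `p ∈ (0,1)`, `H ∈ (0, 1/2)`, `c ≥ 0`, the variance of
`B_N = ξ_1 + ⋯ + ξ_N` grows linearly:
`Var(B_N)/N → p(1 − p) + 2·p·c·Σ_{k=1}^∞ k^(2H−2)` as `N → ∞`. -/
theorem gbp_variance_asymptotics_srd {Ω : Type*} [MeasurableSpace Ω] (P : Measure Ω)
    [IsProbabilityMeasure P] (p H c : ℝ) (hp0 : 0 < p) (hp1 : p < 1)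
    (hH0 : 0 < H) (hH1 : H < 1 / 2) (hc : 0 ≤ c)
    (ξ : ℕ → Ω → ℝ) (hm : ∀ i, Measurable (ξ i))
    (h01 : ∀ i, ∀ᵐ ω ∂P, ξ i ω = 0 ∨ ξ i ω = 1)
    (hP1 : ∀ i, P {ω | ξ i ω = 1} = ENNReal.ofReal p)
    (hP2 : ∀ i j, i ≠ j → P ({ω | ξ i ω = 1} ∩ {ω | ξ j ω = 1}) =
      ENNReal.ofReal (p * (p + c * |(i : ℝ) - (j : ℝ)| ^ (2 * H - 2)))) :
    Tendsto
      (fun N : ℕ => variance (fun ω => ∑ i ∈ Finset.range N, ξ i ω) P / (N : ℝ))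
      atTop
      (nhds (p * (1 - p) + 2 * p * c * ∑' k : ℕ, ((k : ℝ) + 1) ^ (2 * H - 2))) := by
  set a : ℝ := 2 * H - 2 with ha_def
  have ha1 : a < -1 := by rw [ha_def]; linarith
  -- summability of the series
  have hsum : Summable (fun k : ℕ => ((k : ℝ) + 1) ^ a) := by
    have h := (Real.summable_nat_rpow (p := a)).2 ha1
    have h2 := (summable_nat_add_iff (f := fun n : ℕ => (n : ℝ) ^ a) 1).2 h
    simpa using h2
  -- the sets A i
  set A : ℕ → Set Ω := fun i => {ω | ξ i ω = 1} with hA_def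
  have hA : ∀ i, MeasurableSet (A i) := fun i => (hm i) (measurableSet_singleton 1)
  have hMem : ∀ i, MemLp (ξ i) 2 P := fun i =>
    MemLp.of_bound (hm i).aestronglyMeasurable 1 (by
      filter_upwards [h01 i] with ω hω
      rcases hω with h | h <;> simp [h])
  have hind : ∀ i j, (fun ω => ξ i ω * ξ j ω) =ᵐ[P] Set.indicator (A i ∩ A j) 1 := by
    intro i j
    filter_upwards [h01 i, h01 j] with ω hi hj
    rcases hi with hi | hi <;> rcases hj with hj | hj <;>
      simp [Set.indicator_apply, A, Set.mem_inter_iff, Set.mem_setOf_eq, hi, hj]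
  have hInt : ∀ i j, Integrable (fun ω => ξ i ω * ξ j ω) P := fun i j =>
    ((integrable_const (1 : ℝ)).indicator ((hA i).inter (hA j))).congr (hind i j).symm
  have hT : ∀ i j, ∫ ω, ξ i ω * ξ j ω ∂P = (P (A i ∩ A j)).toReal := by
    intro i j
    rw [integral_congr_ae (hind i j), integral_indicator_one ((hA i).inter (hA j))]
    rfl
  have hE1 : ∀ i, ∫ ω, ξ i ω ∂P = p := by
    intro i
    have heq : (fun ω => ξ i ω) =ᵐ[P] fun ω => ξ i ω * ξ i ω := by
      filter_upwards [h01 i] with ω h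
      rcases h with h | h <;> simp [h]
    rw [integral_congr_ae heq, hT i i, Set.inter_self, hP1 i,
      ENNReal.toReal_ofReal hp0.le]
  have hTval : ∀ i j, (P (A i ∩ A j)).toReal
      = p ^ 2 + (if i = j then p - p ^ 2 else p * c * |(i : ℝ) - (j : ℝ)| ^ a) := by
    intro i j
    by_cases h : i = j
    · subst h
      rw [Set.inter_self, hP1, ENNReal.toReal_ofReal hp0.le, if_pos rfl]; ring
    · rw [hP2 i j h, if_neg h, ENNReal.toReal_ofReal (by
        have hr : (0 : ℝ) ≤ |(i : ℝ) - (j : ℝ)| ^ a := Real.rpow_nonneg (abs_nonneg _) _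
        have := mul_nonneg hc hr
        nlinarith)]
      ring
  -- variance formula
  have hvar : ∀ N : ℕ, variance (fun ω => ∑ i ∈ Finset.range N, ξ i ω) P
      = N * (p * (1 - p))
        + 2 * p * c * ∑ m ∈ Finset.range N, ∑ k ∈ Finset.range m, ((k : ℝ) + 1) ^ a := by
    intro N
    have hX : MemLp (fun ω => ∑ i ∈ Finset.range N, ξ i ω) 2 P :=
      memLp_finset_sum (Finset.range N) fun i _ => hMem i
    have hmean : ∫ ω, ∑ i ∈ Finset.range N, ξ i ω ∂P = N * p := by
      rw [integral_finset_sum _ fun i _ => (hMem i).integrable one_le_two]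
      simp [hE1, Finset.sum_const, Finset.card_range, nsmul_eq_mul]
    have hsq : ∫ ω, (∑ i ∈ Finset.range N, ξ i ω) ^ 2 ∂P
        = ∑ i ∈ Finset.range N, ∑ j ∈ Finset.range N, (P (A i ∩ A j)).toReal := by
      have hpt : ∀ ω, (∑ i ∈ Finset.range N, ξ i ω) ^ 2
          = ∑ i ∈ Finset.range N, ∑ j ∈ Finset.range N, ξ i ω * ξ j ω := by
        intro ω; rw [sq, Finset.sum_mul_sum]
      simp_rw [hpt]
      rw [integral_finset_sum _ fun i _ => integrable_finset_sum _ fun j _ => hInt i j]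
      refine Finset.sum_congr rfl fun i _ => ?_
      rw [integral_finset_sum _ fun j _ => hInt i j]
      exact Finset.sum_congr rfl fun j _ => hT i j
    have hTsum : ∑ i ∈ Finset.range N, ∑ j ∈ Finset.range N, (P (A i ∩ A j)).toReal
        = N * (N * p ^ 2) + (N * (p - p ^ 2)
          + p * c * (2 * ∑ m ∈ Finset.range N, ∑ k ∈ Finset.range m, ((k : ℝ) + 1) ^ a)) := by
      rw [← gbp_aux_G a N]
      calc ∑ i ∈ Finset.range N, ∑ j ∈ Finset.range N, (P (A i ∩ A j)).toReal
          = ∑ i ∈ Finset.range N, ∑ j ∈ Finset.range N,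
              (p ^ 2 + ((if i = j then p - p ^ 2 else 0)
                + p * c * (if i = j then (0 : ℝ) else |(i : ℝ) - (j : ℝ)| ^ a))) := by
            refine Finset.sum_congr rfl fun i _ => Finset.sum_congr rfl fun j _ => ?_
            rw [hTval i j]
            by_cases h : i = j <;> simp [h]
        _ = ∑ i ∈ Finset.range N, ((N : ℝ) * p ^ 2 + ((p - p ^ 2)
              + p * c * ∑ j ∈ Finset.range N,
                (if i = j then (0 : ℝ) else |(i : ℝ) - (j : ℝ)| ^ a))) := by
            refine Finset.sum_congr rfl fun i hi => ?_
            rw [Finset.sum_add_distrib, Finset.sum_add_distrib, Finset.sum_const,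
              Finset.card_range, nsmul_eq_mul, ← Finset.mul_sum,
              Finset.sum_ite_eq, if_pos hi]
        _ = N * ((N : ℝ) * p ^ 2) + (N * (p - p ^ 2)
              + p * c * ∑ i ∈ Finset.range N, ∑ j ∈ Finset.range N,
                (if i = j then (0 : ℝ) else |(i : ℝ) - (j : ℝ)| ^ a)) := by
            rw [Finset.sum_add_distrib, Finset.sum_add_distrib, Finset.sum_const,
              Finset.card_range, nsmul_eq_mul, ← Finset.mul_sum, Finset.sum_const,
              Finset.card_range, nsmul_eq_mul]
    rw [variance_eq_sub hX]
    simp only [Pi.pow_apply]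
    rw [hsq, hmean, hTsum]
    ring
  -- the limit
  have hlim : Tendsto (fun N : ℕ => p * (1 - p)
      + 2 * p * c * ((N : ℝ)⁻¹ * ∑ m ∈ Finset.range N, ∑ k ∈ Finset.range m, ((k : ℝ) + 1) ^ a))
      atTop (nhds (p * (1 - p) + 2 * p * c * ∑' k : ℕ, ((k : ℝ) + 1) ^ a)) :=
    tendsto_const_nhds.add ((hsum.hasSum.tendsto_sum_nat.cesaro).const_mul _)
  refine hlim.congr' ?_
  filter_upwards [eventually_ge_atTop 1] with N hN
  have hN0 : (N : ℝ) ≠ 0 := Nat.cast_ne_zero.2 (by omega)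
  rw [hvar N]
  field_simp
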